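/- Let B be an N×N nonnegative real matrix such that B = K^n for some positive integer n and some inverse M-matrix K. Then B is strongly infinitely divisible: det(B) > 0 and for every positive integer m there exists a nonnegative matrix R with R^m = B. -/

import Mathlib

open Matrix

/-- A real square matrix is (entrywise) nonnegative if all of its entries are nonnegative. -/
def IsNonnegMatrix {ι : Type*} (B : Matrix ι ι ℝ) : Prop :=
  ∀ i j, 0 ≤ B i j

/-- A Z-matrix is a real square matrix all of whose off-diagonal entries are nonpositive. -/
def IsZMatrix {ι : Type*} (Q : Matrix ι ι ℝ) : Prop :=
  ∀ i j, i ≠ j → Q i j ≤ 0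

/-- A nonnegative matrix `B` is infinitely divisible if for every positive integer `n`
there exists a nonnegative matrix `K` with `K ^ n = B`. -/
def IsInfinitelyDivisible {ι : Type*} [Fintype ι] [DecidableEq ι] (B : Matrix ι ι ℝ) : Prop :=
  ∀ n : ℕ, 0 < n → ∃ K : Matrix ι ι ℝ, IsNonnegMatrix K ∧ K ^ n = B

/-- `B` is strongly infinitely divisible if it is infinitely divisible and `det B > 0`. -/
def IsStronglyInfinitelyDivisible {ι : Type*} [Fintype ι] [DecidableEq ι]
    (B : Matrix ι ι ℝ) : Prop :=
  IsInfinitelyDivisible B ∧ 0 < B.det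

/-- An inverse M-matrix is an invertible nonnegative matrix whose inverse is a Z-matrix. -/
def IsInverseMMatrix {ι : Type*} [Fintype ι] [DecidableEq ι] (K : Matrix ι ι ℝ) : Prop :=
  IsUnit K.det ∧ IsNonnegMatrix K ∧ IsZMatrix K⁻¹

/-- A stochastic matrix is a nonnegative square matrix each of whose rows sums to `1`. -/
def IsStochasticMatrix {ι : Type*} [Fintype ι] (P : Matrix ι ι ℝ) : Prop :=
  IsNonnegMatrix P ∧ ∀ i, ∑ j, P i j = 1

/-- An intensity matrix is a real square matrix whose off-diagonal entries are nonnegative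
and each of whose rows sums to `0`. -/
def IsIntensityMatrix {ι : Type*} [Fintype ι] (R : Matrix ι ι ℝ) : Prop :=
  (∀ i j, i ≠ j → 0 ≤ R i j) ∧ ∀ i, ∑ j, R i j = 0

section AuxiliaryLemmas

open Finset Matrix

open Finset

/-- Coefficients of the binomial series `(1-x)^{-α} = ∑ cc α k * x^k`. -/
noncomputable def cc (α : ℝ) : ℕ → ℝ
  | 0 => 1
  | k+1 => cc α k * (α + k) / (k + 1)

lemma cc_zero (α : ℝ) : cc α 0 = 1 := rfl
lemma cc_succ (α : ℝ) (k : ℕ) : cc α (k+1) = cc α (k) * (α + k) / (k+1) := rfl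

lemma cc_succ_mul (α : ℝ) (k : ℕ) : ((k:ℝ)+1) * cc α (k+1) = (α + k) * cc α k := by
  rw [cc_succ]
  field_simp

lemma cc_nonneg {α : ℝ} (hα : 0 ≤ α) (k : ℕ) : 0 ≤ cc α k := by
  induction k with
  | zero => norm_num [cc_zero]
  | succ k ih =>
    rw [cc_succ]
    have : (0:ℝ) ≤ α + k := by positivity
    positivity

lemma cc_le_one {α : ℝ} (hα : 0 ≤ α) (hα1 : α ≤ 1) (k : ℕ) : cc α k ≤ 1 := by
  induction k with
  | zero => simp [cc_zero]
  | succ k ih =>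
    rw [cc_succ, div_le_one (by positivity)]
    calc cc α k * (α + k) ≤ 1 * (1 + k) := by
          apply mul_le_mul ih (by linarith) (by positivity) zero_le_one
      _ = (k:ℝ) + 1 := by ring

lemma cc_one (k : ℕ) : cc 1 k = 1 := by
  induction k with
  | zero => rfl
  | succ k ih =>
    rw [cc_succ, ih]
    rw [div_eq_one_iff_eq (by positivity)]
    ring

/-- Vandermonde-type convolution identity. -/
lemma cc_vandermonde (α β : ℝ) (k : ℕ) :
    ∑ p ∈ Finset.HasAntidiagonal.antidiagonal k, cc α p.1 * cc β p.2 = cc (α + β) k := by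
  induction k with
  | zero => simp [cc]
  | succ k ih =>
    have key : ((k:ℝ)+1) * ∑ p ∈ Finset.HasAntidiagonal.antidiagonal (k+1), cc α p.1 * cc β p.2
        = (α + β + k) * ∑ p ∈ Finset.HasAntidiagonal.antidiagonal k, cc α p.1 * cc β p.2 := by
      rw [Finset.Nat.sum_antidiagonal_eq_sum_range_succ (fun i j => cc α i * cc β j),
          Finset.Nat.sum_antidiagonal_eq_sum_range_succ (fun i j => cc α i * cc β j)]
      have h1 : ((k:ℝ)+1) * ∑ i ∈ range (k+1+1), cc α i * cc β (k+1-i)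
          = ∑ i ∈ range (k+1+1), ((i:ℝ) * cc α i * cc β (k+1-i)
            + cc α i * (((k+1-i : ℕ):ℝ) * cc β (k+1-i))) := by
        rw [Finset.mul_sum]
        apply Finset.sum_congr rfl
        intro i hi
        have hik : i ≤ k+1 := by
          simp only [Finset.mem_range] at hi; omega
        have : ((k+1-i : ℕ):ℝ) = (k:ℝ) + 1 - i := by
          push_cast [Nat.cast_sub hik]; ring
        rw [this]; ring
      rw [h1, Finset.sum_add_distrib]
      -- first sum: drop i = 0 and shift
      have h2 : ∑ i ∈ range (k+1+1), (i:ℝ) * cc α i * cc β (k+1-i)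
          = α * (∑ i ∈ range (k+1), cc α i * cc β (k-i))
            + ∑ i ∈ range (k+1), (i:ℝ) * cc α i * cc β (k-i) := by
        rw [Finset.sum_range_succ' (fun i => (i:ℝ) * cc α i * cc β (k+1-i))]
        simp only [Nat.cast_zero, zero_mul, cc_zero, add_zero, mul_zero]
        have hterm : ∀ i ∈ range (k+1), ((i+1:ℕ):ℝ) * cc α (i+1) * cc β (k+1-(i+1))
            = α * (cc α i * cc β (k-i)) + (i:ℝ) * cc α i * cc β (k-i) := by
          intro i hi
          have hsub : k + 1 - (i+1) = k - i := by omega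
          have hc : ((i+1:ℕ):ℝ) = (i:ℝ) + 1 := by push_cast; ring
          rw [hsub, hc, cc_succ_mul α i]
          ring
        rw [Finset.sum_congr rfl hterm, Finset.sum_add_distrib, Finset.mul_sum]
      -- second sum: drop i = k+1 and use recurrence on β side
      have h3 : ∑ i ∈ range (k+1+1), cc α i * (((k+1-i : ℕ):ℝ) * cc β (k+1-i))
          = β * (∑ i ∈ range (k+1), cc α i * cc β (k-i))
            + ∑ i ∈ range (k+1), ((k-i:ℕ):ℝ) * (cc α i * cc β (k-i)) := by
        rw [Finset.sum_range_succ (fun i => cc α i * (((k+1-i : ℕ):ℝ) * cc β (k+1-i)))]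
        simp only [Nat.sub_self, Nat.cast_zero, zero_mul, mul_zero, add_zero]
        have hterm : ∀ i ∈ range (k+1), cc α i * (((k+1-i:ℕ):ℝ) * cc β (k+1-i))
            = β * (cc α i * cc β (k-i)) + ((k-i:ℕ):ℝ) * (cc α i * cc β (k-i)) := by
          intro i hi
          have hik : i ≤ k := by simp only [Finset.mem_range] at hi; omega
          have hsub : k + 1 - i = (k - i) + 1 := by omega
          have hc : ((k - i + 1 : ℕ):ℝ) = ((k-i:ℕ):ℝ) + 1 := by push_cast; ring
          rw [hsub, hc, cc_succ_mul β (k-i)]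
          ring
        rw [Finset.sum_congr rfl hterm, Finset.sum_add_distrib, Finset.mul_sum]
      rw [h2, h3]
      have h4 : ∑ i ∈ range (k+1), (i:ℝ) * cc α i * cc β (k-i)
            + ∑ i ∈ range (k+1), ((k-i:ℕ):ℝ) * (cc α i * cc β (k-i))
          = k * ∑ i ∈ range (k+1), cc α i * cc β (k-i) := by
        rw [← Finset.sum_add_distrib, Finset.mul_sum]
        apply Finset.sum_congr rfl
        intro i hi
        have hik : i ≤ k := by simp only [Finset.mem_range] at hi; omega
        have : ((k-i:ℕ):ℝ) = (k:ℝ) - i := by push_cast [Nat.cast_sub hik]; ring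
        rw [this]; ring
      linarith [h4]
    have hne : ((k:ℝ)+1) ≠ 0 := by positivity
    rw [ih] at key
    have key2 : ((k:ℝ)+1) * ∑ p ∈ Finset.HasAntidiagonal.antidiagonal (k+1), cc α p.1 * cc β p.2
        = ((k:ℝ)+1) * cc (α+β) (k+1) := by
      rw [key, cc_succ_mul]
    exact mul_left_cancel₀ hne key2

variable {N : ℕ}

lemma pow_entry_nonneg {Q : Matrix (Fin N) (Fin N) ℝ} (hQ : ∀ i j, 0 ≤ Q i j) (k : ℕ) :
    ∀ i j, 0 ≤ (Q ^ k) i j := by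
  induction k with
  | zero =>
    intro i j
    rw [pow_zero]
    by_cases h : i = j <;> simp [Matrix.one_apply, h]
  | succ k ih =>
    intro i j
    rw [pow_succ, Matrix.mul_apply]
    exact Finset.sum_nonneg fun l _ => mul_nonneg (ih i l) (hQ l j)

/-- The matrix series `∑ cc α k • Q^k`, defined entrywise. -/
noncomputable def TT (Q : Matrix (Fin N) (Fin N) ℝ) (α : ℝ) : Matrix (Fin N) (Fin N) ℝ :=
  Matrix.of fun i j => ∑' k, cc α k * (Q ^ k) i j

lemma TT_apply (Q : Matrix (Fin N) (Fin N) ℝ) (α : ℝ) (i j : Fin N) :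
    TT Q α i j = ∑' k, cc α k * (Q ^ k) i j := rfl

section
variable {Q : Matrix (Fin N) (Fin N) ℝ} (hQ : ∀ i j, 0 ≤ Q i j)
  (hsum : ∀ i j, Summable fun k => (Q ^ k) i j)

include hQ hsum in
lemma summable_cc {α : ℝ} (hα : 0 ≤ α) (hα1 : α ≤ 1) (i j : Fin N) :
    Summable fun k => cc α k * (Q ^ k) i j := by
  apply (hsum i j).of_nonneg_of_le
    (fun k => mul_nonneg (cc_nonneg hα k) (pow_entry_nonneg hQ k i j))
  intro k
  calc cc α k * (Q ^ k) i j ≤ 1 * (Q ^ k) i j :=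
        mul_le_mul_of_nonneg_right (cc_le_one hα hα1 k) (pow_entry_nonneg hQ k i j)
    _ = (Q ^ k) i j := one_mul _

include hQ hsum in
lemma summable_cc_norm {α : ℝ} (hα : 0 ≤ α) (hα1 : α ≤ 1) (i j : Fin N) :
    Summable fun k => ‖cc α k * (Q ^ k) i j‖ := by
  refine (summable_cc hQ hsum hα hα1 i j).congr fun k => ?_
  exact (Real.norm_of_nonneg
    (mul_nonneg (cc_nonneg hα k) (pow_entry_nonneg hQ k i j))).symm

omit hsum in
include hQ in
lemma TT_nonneg {α : ℝ} (hα : 0 ≤ α) : ∀ i j, 0 ≤ TT Q α i j := by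
  intro i j
  exact tsum_nonneg fun k => mul_nonneg (cc_nonneg hα k) (pow_entry_nonneg hQ k i j)

include hQ hsum in
include hQ hsum in
set_option maxHeartbeats 1000000 in
lemma TT_mul {α β : ℝ} (hα : 0 ≤ α) (hβ : 0 ≤ β) (hαβ : α + β ≤ 1) :
    TT Q α * TT Q β = TT Q (α + β) := by
  have hα1 : α ≤ 1 := by linarith
  have hβ1 : β ≤ 1 := by linarith
  ext i j
  rw [Matrix.mul_apply, TT_apply]
  have step1 : ∀ l, TT Q α i l * TT Q β l j
      = ∑' n, ∑ p ∈ Finset.HasAntidiagonal.antidiagonal n,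
          (cc α p.1 * (Q ^ p.1) i l) * (cc β p.2 * (Q ^ p.2) l j) := by
    intro l
    rw [TT_apply, TT_apply]
    exact tsum_mul_tsum_eq_tsum_sum_antidiagonal_of_summable_norm
      (summable_cc_norm hQ hsum hα hα1 i l) (summable_cc_norm hQ hsum hβ hβ1 l j)
  rw [Finset.sum_congr rfl fun l _ => step1 l]
  rw [← Summable.tsum_finsetSum fun l _ =>
    summable_sum_mul_antidiagonal_of_summable_norm'
      (summable_cc_norm hQ hsum hα hα1 i l) (summable_cc hQ hsum hα hα1 i l)
      (summable_cc_norm hQ hsum hβ hβ1 l j) (summable_cc hQ hsum hβ hβ1 l j)]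
  refine tsum_congr fun n => ?_
  rw [Finset.sum_comm]
  have hp : ∀ p ∈ Finset.HasAntidiagonal.antidiagonal n,
      ∑ l, (cc α p.1 * (Q ^ p.1) i l) * (cc β p.2 * (Q ^ p.2) l j)
      = (cc α p.1 * cc β p.2) * (Q ^ n) i j := by
    intro p hp
    have hpn : p.1 + p.2 = n := Finset.HasAntidiagonal.mem_antidiagonal.mp hp
    have : ∑ l, (cc α p.1 * (Q ^ p.1) i l) * (cc β p.2 * (Q ^ p.2) l j)
        = (cc α p.1 * cc β p.2) * ∑ l, (Q ^ p.1) i l * (Q ^ p.2) l j := by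
      rw [Finset.mul_sum]
      exact Finset.sum_congr rfl fun l _ => by ring
    rw [this, ← Matrix.mul_apply, ← pow_add, hpn]
  rw [Finset.sum_congr rfl hp, ← Finset.sum_mul, cc_vandermonde]

include hQ hsum in
lemma TT_pow (m : ℕ) (hm : 0 < m) : ∀ r : ℕ, r + 1 ≤ m →
    TT Q (1 / m) ^ (r + 1) = TT Q ((r + 1) / m) := by
  have hm' : (0:ℝ) < m := by exact_mod_cast hm
  intro r
  induction r with
  | zero => intro _; rw [pow_one]; norm_num
  | succ r ih =>
    intro hr
    have hr' : r + 1 ≤ m := by omega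
    rw [pow_succ, ih hr']
    have h1 : (0:ℝ) ≤ ((r:ℝ) + 1) / m := by positivity
    have h2 : (0:ℝ) ≤ 1 / (m:ℝ) := by positivity
    have h3 : ((r:ℝ) + 1) / m + 1 / m ≤ 1 := by
      rw [← add_div, div_le_one hm']
      have hcast : ((r:ℝ) + 1 + 1) = ((r + 1 + 1 : ℕ) : ℝ) := by push_cast; ring
      rw [hcast]
      exact_mod_cast hr
    rw [TT_mul hQ hsum h1 h2 h3]
    push_cast
    ring_nf

end

/-- Every inverse M-matrix has an entrywise nonnegative `m`-th root. -/
lemma exists_nonneg_root {N : ℕ} (K : Matrix (Fin N) (Fin N) ℝ)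
    (hK : IsInverseMMatrix K) (m : ℕ) (hm : 0 < m) :
    ∃ T : Matrix (Fin N) (Fin N) ℝ, IsNonnegMatrix T ∧ T ^ m = K := by
  obtain ⟨hdet, hKnn, hZ⟩ := hK
  set s : ℝ := 1 + ∑ i, |K⁻¹ i i| with hs_def
  have hs1 : 1 ≤ s := by
    have h : (0:ℝ) ≤ ∑ i, |K⁻¹ i i| := Finset.sum_nonneg fun i _ => abs_nonneg _
    rw [hs_def]; linarith
  have hs0 : 0 < s := by linarith
  have hsne : s ≠ 0 := ne_of_gt hs0
  have hdiag : ∀ i, K⁻¹ i i ≤ s := by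
    intro i
    have h1 : K⁻¹ i i ≤ |K⁻¹ i i| := le_abs_self _
    have h2 : |K⁻¹ i i| ≤ ∑ l, |K⁻¹ l l| :=
      Finset.single_le_sum (fun l _ => abs_nonneg (K⁻¹ l l)) (Finset.mem_univ i)
    linarith
  set Q : Matrix (Fin N) (Fin N) ℝ := 1 - s⁻¹ • K⁻¹ with hQ_def
  have hQnn : ∀ i j, 0 ≤ Q i j := by
    intro i j
    have : Q i j = (1 : Matrix (Fin N) (Fin N) ℝ) i j - s⁻¹ * K⁻¹ i j := rfl
    rw [this]
    by_cases h : i = j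
    · subst h
      rw [Matrix.one_apply_eq]
      have : s⁻¹ * K⁻¹ i i ≤ s⁻¹ * s :=
        mul_le_mul_of_nonneg_left (hdiag i) (by positivity)
      rw [inv_mul_cancel₀ hsne] at this
      linarith
    · rw [Matrix.one_apply_ne h]
      have : s⁻¹ * K⁻¹ i j ≤ 0 :=
        mul_nonpos_of_nonneg_of_nonpos (by positivity) (hZ i j h)
      linarith
  have hone_sub : (1 : Matrix (Fin N) (Fin N) ℝ) - Q = s⁻¹ • K⁻¹ := by
    rw [hQ_def, sub_sub_cancel]
  have hinv : ((1 : Matrix (Fin N) (Fin N) ℝ) - Q) * (s • K) = 1 := by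
    rw [hone_sub, Matrix.smul_mul, Matrix.mul_smul, Matrix.nonsing_inv_mul K hdet,
      smul_smul, inv_mul_cancel₀ hsne, one_smul]
  -- partial sums of the geometric series
  have hpartial : ∀ M : ℕ, ∑ k ∈ Finset.range M, Q ^ k = s • K - s • (Q ^ M * K) := by
    intro M
    have hg : (∑ k ∈ Finset.range M, Q ^ k) * ((1 : Matrix (Fin N) (Fin N) ℝ) - Q)
        = 1 - Q ^ M := by
      have := geom_sum_mul Q M
      have h2 : (∑ k ∈ Finset.range M, Q ^ k) * ((1 : Matrix (Fin N) (Fin N) ℝ) - Q)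
          = -((∑ k ∈ Finset.range M, Q ^ k) * (Q - 1)) := by
        noncomm_ring
      rw [h2, this, neg_sub]
    have := congrArg (· * (s • K)) hg
    rw [mul_assoc, hinv, mul_one] at this
    rw [this, Matrix.sub_mul, Matrix.one_mul, Matrix.mul_smul]
  have hsum : ∀ i j, Summable fun k => (Q ^ k) i j := by
    intro i j
    apply summable_of_sum_range_le (c := s * K i j) (fun k => pow_entry_nonneg hQnn k i j)
    intro M
    have h1 : (∑ k ∈ Finset.range M, Q ^ k) i j = ∑ k ∈ Finset.range M, (Q ^ k) i j := by
      simp [Matrix.sum_apply]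
    have h2 := congrFun (congrFun (hpartial M) i) j
    rw [h1] at h2
    rw [h2]
    have h3 : 0 ≤ (Q ^ M * K) i j := by
      rw [Matrix.mul_apply]
      exact Finset.sum_nonneg fun l _ => mul_nonneg (pow_entry_nonneg hQnn M i l) (hKnn l j)
    have : (s • K - s • (Q ^ M * K)) i j = s * K i j - s * (Q ^ M * K) i j := rfl
    rw [this]
    nlinarith
  -- the value of the full geometric series
  have htsum : ∀ i j, ∑' k, (Q ^ k) i j = s * K i j := by
    intro i j
    have h1 : Filter.Tendsto (fun M => ∑ k ∈ Finset.range M, (Q ^ k) i j)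
        Filter.atTop (nhds (∑' k, (Q ^ k) i j)) :=
      (hsum i j).hasSum.tendsto_sum_nat
    have h2 : Filter.Tendsto (fun M => ∑ k ∈ Finset.range M, (Q ^ k) i j)
        Filter.atTop (nhds (s * K i j)) := by
      have heq : (fun M => ∑ k ∈ Finset.range M, (Q ^ k) i j)
          = fun M => s * K i j - s * (Q ^ M * K) i j := by
        funext M
        have h2 := congrFun (congrFun (hpartial M) i) j
        have h1 : (∑ k ∈ Finset.range M, Q ^ k) i j = ∑ k ∈ Finset.range M, (Q ^ k) i j := by
          simp [Matrix.sum_apply]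
        rw [h1] at h2
        exact h2
      rw [heq]
      have hz : Filter.Tendsto (fun M => s * (Q ^ M * K) i j) Filter.atTop (nhds 0) := by
        have : ∀ M, (Q ^ M * K) i j = ∑ l, (Q ^ M) i l * K l j := fun M => Matrix.mul_apply
        have hterm : ∀ l : Fin N, Filter.Tendsto (fun M => (Q ^ M) i l * K l j)
            Filter.atTop (nhds 0) := by
          intro l
          have := (hsum i l).tendsto_atTop_zero
          have := this.mul_const (K l j)
          simpa using this
        have hsum0 : Filter.Tendsto (fun M => ∑ l, (Q ^ M) i l * K l j)
            Filter.atTop (nhds 0) := by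
          have := tendsto_finset_sum Finset.univ (fun l _ => hterm l)
          simpa using this
        have : Filter.Tendsto (fun M => (Q ^ M * K) i j) Filter.atTop (nhds 0) := by
          simpa [Matrix.mul_apply] using hsum0
        simpa using this.const_mul s
      have := (tendsto_const_nhds (x := s * K i j)).sub hz
      simpa using this
    exact tendsto_nhds_unique h1 h2
  -- TT Q 1 = s • K
  have hTT1 : TT Q 1 = s • K := by
    ext i j
    rw [TT_apply]
    have : ∀ k : ℕ, cc 1 k * (Q ^ k) i j = (Q ^ k) i j := by
      intro k; rw [cc_one]; ring
    rw [tsum_congr this, htsum]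
    rfl
  -- the root
  have hm' : (0:ℝ) < m := by exact_mod_cast hm
  set r : ℝ := s ^ (-(1:ℝ) / m) with hr_def
  have hr0 : 0 ≤ r := Real.rpow_nonneg (le_of_lt hs0) _
  refine ⟨r • TT Q (1 / m), ?_, ?_⟩
  · intro i j
    have := TT_nonneg (Q := Q) hQnn (α := 1/(m:ℝ)) (by positivity) i j
    exact mul_nonneg hr0 this
  · rw [smul_pow]
    have hpow : TT Q (1 / m) ^ m = TT Q 1 := by
      obtain ⟨m', rfl⟩ : ∃ m', m = m' + 1 := ⟨m - 1, by omega⟩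
      rw [TT_pow hQnn hsum (m' + 1) hm m' le_rfl]
      have hm1 : ((m':ℝ) + 1) / ((m' + 1 : ℕ) : ℝ) = 1 := by
        push_cast; exact div_self (by positivity)
      rw [hm1]
    rw [hpow, hTT1]
    have hrm : r ^ m = s⁻¹ := by
      rw [hr_def, ← Real.rpow_natCast (s ^ (-(1:ℝ)/m)) m, ← Real.rpow_mul (le_of_lt hs0)]
      have : (-(1:ℝ)/m) * m = -1 := by field_simp
      rw [this, Real.rpow_neg_one]
    rw [hrm, smul_smul, inv_mul_cancel₀ hsne, one_smul]

end AuxiliaryLemmas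

theorem stmt4 (N : ℕ) (B : Matrix (Fin N) (Fin N) ℝ) (hBnn : IsNonnegMatrix B)
    (n : ℕ) (hn : 0 < n) (K : Matrix (Fin N) (Fin N) ℝ) (hK : IsInverseMMatrix K)
    (hBK : B = K ^ n) :
    IsStronglyInfinitelyDivisible B := by
  have hdiv : IsInfinitelyDivisible B := by
    intro m hm
    obtain ⟨T, hTnn, hTm⟩ := exists_nonneg_root K hK m hm
    refine ⟨T ^ n, fun i j => pow_entry_nonneg hTnn n i j, ?_⟩
    rw [← pow_mul, mul_comm, pow_mul, hTm, hBK]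
  refine ⟨hdiv, ?_⟩
  obtain ⟨R, hRnn, hR2⟩ := hdiv 2 (by norm_num)
  have hdetB : B.det ≠ 0 := by
    rw [hBK, Matrix.det_pow]
    exact pow_ne_zero n hK.1.ne_zero
  have hB2det : B.det = R.det ^ 2 := by rw [← hR2, Matrix.det_pow]
  rw [hB2det]
  have h0 : (0:ℝ) ≤ R.det ^ 2 := by positivity
  rcases h0.eq_or_lt with h | h
  · exact absurd (hB2det.trans h.symm) hdetB
  · exact h
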